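/- Let (Q_1,…,Q_k) be a multiset family tuple with each Q_j of shape (m^{n_j}) and with defined type λ. Then there exists a closed multiset family tuple (Q'_1,…,Q'_k) with each Q'_j of shape (m^{n_j}) whose type μ is defined and satisfies μ ⊴ λ; moreover, if (Q_1,…,Q_k) is not itself closed then μ ⊲ λ. -/

import Mathlib

/-- The multiplicity of `i` in a multiset family `Q`: the total number of occurrences of `i`,
counted with multiplicity, among the multisets in `Q`. -/
def msetMult (Q : Finset (Multiset ℕ)) (i : ℕ) : ℕ := ∑ S ∈ Q, S.count i

/-- `Q` is a multiset family of shape `(m^n)`: a collection of `n` distinct multisets of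
cardinality `m` with elements in the positive integers. -/
def IsMsetFamily (m n : ℕ) (Q : Finset (Multiset ℕ)) : Prop :=
  Q.card = n ∧ ∀ S ∈ Q, Multiset.card S = m ∧ ∀ x ∈ S, 1 ≤ x

/-- `B` majorizes `A` (written `A ⪯ B`) for multisets: the `r`-th smallest element of `A`
is at most the `r`-th smallest element of `B`. -/
def MsetMaj (A B : Multiset ℕ) : Prop :=
  ∀ r : ℕ, (A.sort (· ≤ ·)).getD r 0 ≤ (B.sort (· ≤ ·)).getD r 0

/-- A multiset family (of cardinality-`m` multisets) is closed if it is downward closed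
under majorization. -/
def ClosedMsetFam (m : ℕ) (Q : Finset (Multiset ℕ)) : Prop :=
  ∀ B ∈ Q, ∀ A : Multiset ℕ, Multiset.card A = m → (∀ x ∈ A, 1 ≤ x) → MsetMaj A B → A ∈ Q

/-- The total multiplicity of `i` over a tuple of multiset families. -/
def msetTupMult {k : ℕ} (Q : Fin k → Finset (Multiset ℕ)) (i : ℕ) : ℕ := ∑ j, msetMult (Q j) i
/-- The type of a family (or tuple) whose multiplicity function is `f` is defined exactly
when `f` is weakly decreasing on the positive integers; then `f` is the conjugate `λ'`
of the type `λ`. -/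
def TypeDefined (f : ℕ → ℕ) : Prop := ∀ i j : ℕ, 1 ≤ i → i ≤ j → f j ≤ f i

/-- The sum of the first `j` parts of the partition `λ` whose conjugate is `f`:
`λ_1 + ⋯ + λ_j = Σ_x min (λ'_x) j`. -/
noncomputable def partSum (f : ℕ → ℕ) (j : ℕ) : ℕ := ∑ᶠ x, min (f x) j

/-- Dominance order: the partition with conjugate `g` is dominated (`⊴`) by the partition
with conjugate `f`. -/
def ConjDom (g f : ℕ → ℕ) : Prop := ∀ j : ℕ, partSum g j ≤ partSum f j

/-- Strict dominance `⊲` of the partition with conjugate `g` by the one with conjugate `f`. -/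
def ConjStrictDom (g f : ℕ → ℕ) : Prop := ConjDom g f ∧ ∃ i : ℕ, 1 ≤ i ∧ g i ≠ f i

/-- number of elements `≥ x`, with multiplicity -/
def geCount (A : Multiset ℕ) (x : ℕ) : ℕ := Multiset.countP (fun a => x ≤ a) A

lemma geCount_coe (l : List ℕ) (x : ℕ) :
    geCount ↑l x = List.countP (fun a => decide (x ≤ a)) l := by
  simp [geCount, Multiset.coe_countP]

lemma geCount_sort (A : Multiset ℕ) (x : ℕ) :
    geCount A x = List.countP (fun a => decide (x ≤ a)) (A.sort (· ≤ ·)) := by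
  conv_lhs => rw [← Multiset.sort_eq A (· ≤ ·)]
  exact geCount_coe _ _

/-- S1: sorted list lower bound -/
lemma countP_ge_of_sorted (l : List ℕ) (hl : l.Pairwise (· ≤ ·)) {r : ℕ} (hr : r < l.length) :
    l.length - r ≤ List.countP (fun a => decide (l[r] ≤ a)) l := by
  have hsplit := List.take_append_drop r l
  have h1 : List.countP (fun a => decide (l[r] ≤ a)) (l.drop r) = (l.drop r).length := by
    rw [List.countP_eq_length]
    intro a ha
    rw [List.mem_iff_getElem] at ha
    obtain ⟨i, hi, rfl⟩ := ha
    rw [List.getElem_drop]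
    simp only [decide_eq_true_eq]
    have : r ≤ r + i := Nat.le_add_right _ _
    have hlen : r + i < l.length := by
      have := hi; simp [List.length_drop] at this; omega
    exact hl.rel_get_of_le (a := ⟨r, hr⟩) (b := ⟨r + i, hlen⟩) (by simp [Fin.le_def])
  calc l.length - r = (l.drop r).length := by simp [List.length_drop]
    _ = List.countP (fun a => decide (l[r] ≤ a)) (l.drop r) := h1.symm
    _ ≤ _ := by
        have h2 := List.countP_append (p := fun a => decide (l[r] ≤ a)) (l₁ := l.take r) (l₂ := l.drop r)
        rw [hsplit] at h2
        omega

/-- S2: sorted list upper bound -/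
lemma countP_le_of_sorted (l : List ℕ) (hl : l.Pairwise (· ≤ ·)) {r x : ℕ} (hr : r < l.length)
    (hx : l[r] < x) :
    List.countP (fun a => decide (x ≤ a)) l ≤ l.length - r - 1 := by
  have hsplit := List.take_append_drop (r+1) l
  have h0 : List.countP (fun a => decide (x ≤ a)) (l.take (r+1)) = 0 := by
    rw [List.countP_eq_zero]
    intro a ha
    rw [List.mem_iff_getElem] at ha
    obtain ⟨i, hi, rfl⟩ := ha
    rw [List.getElem_take]
    simp only [decide_eq_true_eq, not_le]
    have hil : i < l.length := by
      have := hi; simp [List.length_take] at this; omega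
    have hir : i ≤ r := by have := hi; simp [List.length_take] at this; omega
    have : l[i] ≤ l[r] := hl.rel_get_of_le (a := ⟨i, hil⟩) (b := ⟨r, hr⟩) (by simp [Fin.le_def, hir])
    omega
  have : List.countP (fun a => decide (x ≤ a)) l
      = List.countP (fun a => decide (x ≤ a)) (l.take (r+1))
        + List.countP (fun a => decide (x ≤ a)) (l.drop (r+1)) := by
    have h2 := List.countP_append (p := fun a => decide (x ≤ a)) (l₁ := l.take (r+1)) (l₂ := l.drop (r+1))
    rw [hsplit] at h2
    omega
  rw [this, h0, Nat.zero_add]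
  calc List.countP (fun a => decide (x ≤ a)) (l.drop (r+1)) ≤ (l.drop (r+1)).length :=
        List.countP_le_length
    _ = l.length - r - 1 := by simp [List.length_drop]; omega

lemma msetMaj_iff {A B : Multiset ℕ} (hcard : Multiset.card A = Multiset.card B) :
    MsetMaj A B ↔ ∀ x, geCount A x ≤ geCount B x := by
  set la := A.sort (· ≤ ·) with hla
  set lb := B.sort (· ≤ ·) with hlb
  have hsa : la.Pairwise (· ≤ ·) := Multiset.pairwise_sort _ _
  have hsb : lb.Pairwise (· ≤ ·) := Multiset.pairwise_sort _ _
  have hlen : la.length = lb.length := by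
    simp [hla, hlb, Multiset.length_sort, hcard]
  constructor
  · intro h x
    rw [geCount_sort, geCount_sort, ← hla, ← hlb]
    set c := List.countP (fun a => decide (x ≤ a)) la with hc
    rcases Nat.eq_zero_or_pos c with hc0 | hc1
    · omega
    have hcla : c ≤ la.length := List.countP_le_length
    have hrlt : la.length - c < la.length := by omega
    -- la[la.length - c] ≥ x
    have hgea : x ≤ la[la.length - c]'hrlt := by
      by_contra hlt
      push_neg at hlt
      have := countP_le_of_sorted la hsa hrlt hlt
      omega
    have hgeb : x ≤ lb[la.length - c]'(by omega) := by
      have hh := h (la.length - c)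
      rw [List.getD_eq_getElem la 0 hrlt, List.getD_eq_getElem lb 0 (by omega)] at hh
      omega
    have := countP_ge_of_sorted lb hsb (r := la.length - c) (by omega)
    have hmono : List.countP (fun a => decide (lb[la.length - c]'(by omega) ≤ a)) lb
        ≤ List.countP (fun a => decide (x ≤ a)) lb := by
      apply List.countP_mono_left
      intro a _ hpa
      simp only [decide_eq_true_eq] at *
      omega
    omega
  · intro h r
    rcases Nat.lt_or_ge r la.length with hr | hr
    · rw [List.getD_eq_getElem la 0 hr, List.getD_eq_getElem lb 0 (by omega)]
      by_contra hlt
      push_neg at hlt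
      have h1 := countP_ge_of_sorted la hsa hr
      have h2 := countP_le_of_sorted lb hsb (r := r) (by omega) hlt
      have h3 := h (la[r])
      rw [geCount_sort, geCount_sort, ← hla, ← hlb] at h3
      omega
    · rw [List.getD_eq_default la 0 hr]
      exact Nat.zero_le _

lemma geCount_cons (a : ℕ) (s : Multiset ℕ) (x : ℕ) :
    geCount (a ::ₘ s) x = geCount s x + if x ≤ a then 1 else 0 :=
  Multiset.countP_cons _ _ _

lemma geCount_succ_add_count (B : Multiset ℕ) (v : ℕ) :
    geCount B v = geCount B (v+1) + B.count v := by
  induction B using Multiset.induction_on with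
  | empty => simp [geCount]
  | cons a s ih =>
    rw [geCount_cons, geCount_cons, Multiset.count_cons, ih]
    by_cases h1 : v ≤ a <;> by_cases h2 : v+1 ≤ a <;> by_cases h3 : v = a <;>
      simp [h1, h2, h3] <;> omega

lemma geCount_anti (B : Multiset ℕ) {x y : ℕ} (h : x ≤ y) : geCount B y ≤ geCount B x := by
  induction B using Multiset.induction_on with
  | empty => simp [geCount]
  | cons a s ih =>
    rw [geCount_cons, geCount_cons]
    have : (if y ≤ a then 1 else 0) ≤ if x ≤ a then (1:ℕ) else 0 := by
      split_ifs with h1 h2 <;> omega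
    omega

lemma geCount_eq_zero (B : Multiset ℕ) {x : ℕ} (h : B.sum < x) : geCount B x = 0 := by
  rw [geCount, Multiset.countP_eq_zero]
  intro a ha
  have := Multiset.le_sum_of_mem ha
  omega

lemma geCount_zero (B : Multiset ℕ) : geCount B 0 = Multiset.card B := by
  rw [geCount, Multiset.countP_eq_card]
  intro a _; exact Nat.zero_le _

lemma geCount_one (B : Multiset ℕ) (h : ∀ a ∈ B, 1 ≤ a) : geCount B 1 = Multiset.card B := by
  rw [geCount, Multiset.countP_eq_card]
  exact h

lemma eq_of_geCount_eq {A B : Multiset ℕ} (h : ∀ x, geCount A x = geCount B x) : A = B := by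
  ext a
  have h1 := geCount_succ_add_count A a
  have h2 := geCount_succ_add_count B a
  have := h a; have := h (a+1)
  omega

lemma decr_card {B : Multiset ℕ} {v : ℕ} (hv : v ∈ B) :
    Multiset.card ((v-1) ::ₘ B.erase v) = Multiset.card B := by
  rw [Multiset.card_cons, Multiset.card_erase_of_mem hv, Nat.pred_eq_sub_one]
  have : 0 < Multiset.card B := Multiset.card_pos_iff_exists_mem.2 ⟨v, hv⟩
  omega

lemma decr_geCount {B : Multiset ℕ} {v : ℕ} (hv : v ∈ B) (hv2 : 2 ≤ v) (x : ℕ) :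
    geCount ((v-1) ::ₘ B.erase v) x + (if x = v then 1 else 0) = geCount B x := by
  conv_rhs => rw [← Multiset.cons_erase hv]
  rw [geCount_cons, geCount_cons]
  split_ifs <;> omega

lemma decr_count {B : Multiset ℕ} {v : ℕ} (hv : v ∈ B) (i : ℕ) :
    Multiset.count i ((v-1) ::ₘ B.erase v) + (if i = v then 1 else 0)
      = Multiset.count i B + (if i = v-1 then 1 else 0) := by
  conv_rhs => rw [← Multiset.cons_erase hv]
  rw [Multiset.count_cons, Multiset.count_cons]
  split_ifs <;> omega

lemma decr_sum {B : Multiset ℕ} {v : ℕ} (hv : v ∈ B) (hv2 : 2 ≤ v) : ((v-1) ::ₘ B.erase v).sum + 1 = B.sum := by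
  conv_rhs => rw [← Multiset.cons_erase hv]
  rw [Multiset.sum_cons, Multiset.sum_cons]
  omega

lemma decr_pos {B : Multiset ℕ} {v : ℕ} (hv2 : 2 ≤ v) (hB : ∀ x ∈ B, 1 ≤ x) : ∀ x ∈ (v-1) ::ₘ B.erase v, 1 ≤ x := by
  intro x hx
  rcases Multiset.mem_cons.1 hx with rfl | hx'
  · omega
  · exact hB x (Multiset.mem_of_mem_erase hx')


lemma exists_decrement {m : ℕ} {A B : Multiset ℕ} (hA : Multiset.card A = m)
    (hB : Multiset.card B = m) (hApos : ∀ x ∈ A, 1 ≤ x) (hBpos : ∀ x ∈ B, 1 ≤ x)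
    (hmaj : MsetMaj A B) (hne : A ≠ B) :
    ∃ v, 2 ≤ v ∧ v ∈ B ∧ MsetMaj A ((v-1) ::ₘ B.erase v) := by
  have hF : ∀ x, geCount A x ≤ geCount B x := (msetMaj_iff (by rw [hA, hB])).1 hmaj
  have hex : ∃ x, geCount A x < geCount B x := by
    by_contra hc
    push_neg at hc
    exact hne (eq_of_geCount_eq fun x => le_antisymm (hF x) (hc x))
  obtain ⟨x0, hx0⟩ := hex
  have hx0le : x0 ≤ B.sum := by
    by_contra hc
    push_neg at hc
    rw [geCount_eq_zero B hc] at hx0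
    omega
  classical
  set v := Nat.findGreatest (fun x => geCount A x < geCount B x) B.sum with hvdef
  have hPv : geCount A v < geCount B v := Nat.findGreatest_spec (P := fun x => geCount A x < geCount B x) hx0le hx0
  have hmax : ∀ y, v < y → geCount B y ≤ geCount A y := by
    intro y hy
    rcases le_or_gt y B.sum with h | h
    · have := Nat.findGreatest_is_greatest (P := fun x => geCount A x < geCount B x) hy h
      omega
    · rw [geCount_eq_zero B h]; exact Nat.zero_le _
  have hv2 : 2 ≤ v := by
    rcases lt_or_ge v 2 with h | h
    · interval_cases v
      · rw [geCount_zero, geCount_zero, hA, hB] at hPv; omega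
      · rw [geCount_one A hApos, geCount_one B hBpos, hA, hB] at hPv; omega
    · exact h
  have hvmem : v ∈ B := by
    rw [← Multiset.count_pos]
    have h1 := geCount_succ_add_count B v
    have h2 := hmax (v+1) (Nat.lt_succ_self v)
    have h3 : geCount A (v+1) ≤ geCount A v := geCount_anti A (Nat.le_succ v)
    omega
  refine ⟨v, hv2, hvmem, ?_⟩
  rw [msetMaj_iff (by rw [hA, decr_card hvmem, hB])]
  intro x
  have hd := decr_geCount hvmem hv2 x
  by_cases hx : x = v
  · subst hx; simp at hd; omega
  · have h5 := hF x; simp [hx] at hd; omega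

lemma exists_elem_witness {m : ℕ} {Q : Finset (Multiset ℕ)}
    (hfam : ∀ S ∈ Q, Multiset.card S = m ∧ ∀ x ∈ S, 1 ≤ x)
    (hnc : ¬ ClosedMsetFam m Q) :
    ∃ B ∈ Q, ∃ v, 2 ≤ v ∧ v ∈ B ∧ ((v-1) ::ₘ B.erase v) ∉ Q := by
  simp only [ClosedMsetFam, not_forall] at hnc
  obtain ⟨B, hBQ, A, hAcard, hApos, hmaj, hAQ⟩ := hnc
  have key : ∀ W : ℕ, ∀ B : Multiset ℕ, B ∈ Q → B.sum ≤ W →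
      ∀ A : Multiset ℕ, Multiset.card A = m → (∀ x ∈ A, 1 ≤ x) → MsetMaj A B → A ∉ Q →
      ∃ B' ∈ Q, ∃ v, 2 ≤ v ∧ v ∈ B' ∧ ((v-1) ::ₘ B'.erase v) ∉ Q := by
    intro W
    induction W with
    | zero =>
      intro B hBQ hBsum A hAcard hApos hmaj hAQ
      have hne : A ≠ B := fun h => hAQ (h ▸ hBQ)
      obtain ⟨hBm, hBpos⟩ := hfam B hBQ
      obtain ⟨v, hv2, hvmem, _⟩ := exists_decrement hAcard hBm hApos hBpos hmaj hne
      have := Multiset.le_sum_of_mem hvmem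
      omega
    | succ W ih =>
      intro B hBQ hBsum A hAcard hApos hmaj hAQ
      have hne : A ≠ B := fun h => hAQ (h ▸ hBQ)
      obtain ⟨hBm, hBpos⟩ := hfam B hBQ
      obtain ⟨v, hv2, hvmem, hmaj'⟩ := exists_decrement hAcard hBm hApos hBpos hmaj hne
      by_cases hC : ((v-1) ::ₘ B.erase v) ∈ Q
      · have hsum := decr_sum hvmem hv2
        exact ih ((v-1) ::ₘ B.erase v) hC (by omega) A hAcard hApos hmaj' hAQ
      · exact ⟨B, hBQ, v, hv2, hvmem, hC⟩
  exact key B.sum B hBQ le_rfl A hAcard hApos hmaj hAQ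

lemma geCount_add (s t : Multiset ℕ) (x : ℕ) :
    geCount (s + t) x = geCount s x + geCount t x := Multiset.countP_add _ _ _

lemma geCount_replicate (n a x : ℕ) :
    geCount (Multiset.replicate n a) x = if x ≤ a then n else 0 := by
  induction n with
  | zero => simp [geCount]
  | succ n ih =>
    rw [Multiset.replicate_succ, geCount_cons, ih]
    split_ifs <;> omega

lemma closed_step {m i : ℕ} {Q : Finset (Multiset ℕ)}
    (hfam : ∀ S ∈ Q, Multiset.card S = m ∧ ∀ x ∈ S, 1 ≤ x)
    (hcl : ClosedMsetFam m Q) (hi : 1 ≤ i) :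
    msetMult Q (i+1) ≤ msetMult Q i := by
  classical
  have hexp : ∀ j : ℕ, msetMult Q j
      = ∑ d ∈ Finset.range m, (Q.filter (fun S => d < S.count j)).card := by
    intro j
    rw [msetMult]
    have h1 : ∀ S ∈ Q, S.count j = ∑ d ∈ Finset.range m, if d < S.count j then 1 else 0 := by
      intro S hS
      have hc : S.count j ≤ m := by
        have := Multiset.count_le_card j S
        rw [(hfam S hS).1] at this; exact this
      rw [← Finset.card_filter]
      have : (Finset.range m).filter (fun d => d < S.count j) = Finset.range (S.count j) := by
        ext d; simp; omega
      rw [this, Finset.card_range]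
    rw [Finset.sum_congr rfl h1, Finset.sum_comm]
    exact Finset.sum_congr rfl fun d _ => (Finset.card_filter _ _).symm
  rw [hexp, hexp]
  apply Finset.sum_le_sum
  intro d _
  -- injection χ
  set r : Multiset ℕ := Multiset.replicate (d+1) i with hr
  set r' : Multiset ℕ := Multiset.replicate (d+1) (i+1) with hr'
  apply Finset.card_le_card_of_injOn (fun S => r + (S - r'))
  · -- maps into
    intro S hS
    simp only [Finset.mem_coe, Finset.mem_filter] at hS ⊢
    obtain ⟨hSQ, hd⟩ := hS
    have hrle : r' ≤ S := by
      rw [hr', ← Multiset.le_count_iff_replicate_le]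
      omega
    have hcount : ∀ x, Multiset.count x (r + (S - r'))
        = (if i = x then d+1 else 0) + (S.count x - if i+1 = x then d+1 else 0) := by
      intro x
      rw [Multiset.count_add, Multiset.count_sub, hr, hr',
        Multiset.count_replicate, Multiset.count_replicate]
    have hScard := (hfam S hSQ).1
    have hSpos := (hfam S hSQ).2
    have hcard : Multiset.card (r + (S - r')) = m := by
      rw [Multiset.card_add, Multiset.card_sub hrle, hr, hr',
        Multiset.card_replicate, Multiset.card_replicate, hScard]
      have : d + 1 ≤ m := by
        have := Multiset.count_le_card (i+1) S; omega
      omega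
    have hpos : ∀ x ∈ r + (S - r'), 1 ≤ x := by
      intro x hx
      rcases Multiset.mem_add.1 hx with hx | hx
      · have hxi : x = i := Multiset.eq_of_mem_replicate hx
        omega
      · exact hSpos x (Multiset.mem_of_le tsub_le_self hx)
    have hmaj : MsetMaj (r + (S - r')) S := by
      rw [msetMaj_iff (by rw [hcard, hScard])]
      intro x
      have hsplit : geCount S x = geCount (S - r') x + geCount r' x := by
        conv_lhs => rw [← tsub_add_cancel_of_le hrle]
        exact geCount_add _ _ _
      rw [geCount_add, geCount_replicate]
      rw [hsplit, hr', geCount_replicate]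
      split_ifs <;> omega
    refine ⟨hcl S hSQ _ hcard hpos hmaj, ?_⟩
    rw [hcount i]
    have h1 : (if i = i then d+1 else 0) = d+1 := if_pos rfl
    have h2 : (if i+1 = i then d+1 else 0) = 0 := if_neg (by omega)
    rw [h1, h2]
    omega
  · -- injective
    intro S₁ h₁ S₂ h₂ heq
    simp only [Finset.coe_filter, Set.mem_setOf_eq, Finset.mem_coe, Finset.mem_filter] at h₁ h₂
    have hc₁ : d + 1 ≤ S₁.count (i+1) := h₁.2
    have hc₂ : d + 1 ≤ S₂.count (i+1) := h₂.2
    ext x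
    have hx := congrArg (Multiset.count x) heq
    simp only [Multiset.count_add, Multiset.count_sub, hr, hr',
      Multiset.count_replicate] at hx
    rcases eq_or_ne x (i+1) with rfl | e2
    · split_ifs at hx <;> omega
    · rcases eq_or_ne x i with rfl | e1
      · split_ifs at hx <;> omega
      · split_ifs at hx <;> omega

def preQ {k : ℕ} (Q : Fin k → Finset (Multiset ℕ)) (t : ℕ) : ℕ :=
  ∑ x ∈ Finset.Icc 1 t, msetTupMult Q x

lemma sum_count_eq_card_filter (A : Finset ℕ) (S : Multiset ℕ) :
    ∑ x ∈ A, S.count x = Multiset.card (S.filter (· ∈ A)) := by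
  classical
  induction S using Multiset.induction_on with
  | empty => simp
  | cons a s ih =>
    have h1 : ∀ x ∈ A, Multiset.count x (a ::ₘ s) = s.count x + if x = a then 1 else 0 :=
      fun x _ => Multiset.count_cons x a s
    rw [Finset.sum_congr rfl h1, Finset.sum_add_distrib, ih, Finset.sum_ite_eq' A a (fun _ => 1),
      Multiset.filter_cons]
    split_ifs with h <;> simp [h]

lemma sum_count_le (A : Finset ℕ) (S : Multiset ℕ) : ∑ x ∈ A, S.count x ≤ Multiset.card S := by
  classical
  rw [sum_count_eq_card_filter]
  exact Multiset.card_le_card (Multiset.filter_le _ _)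

lemma sum_count_eq (A : Finset ℕ) (S : Multiset ℕ) (h : ∀ a ∈ S, a ∈ A) :
    ∑ x ∈ A, S.count x = Multiset.card S := by
  classical
  rw [sum_count_eq_card_filter]
  congr 1
  exact Multiset.filter_eq_self.2 h

lemma preQ_eq_swap {k : ℕ} (Q : Fin k → Finset (Multiset ℕ)) (t : ℕ) :
    preQ Q t = ∑ j, ∑ S ∈ Q j, ∑ x ∈ Finset.Icc 1 t, S.count x := by
  rw [preQ]
  unfold msetTupMult msetMult
  rw [Finset.sum_comm]
  exact Finset.sum_congr rfl fun j _ => Finset.sum_comm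

lemma preQ_le_total {k m : ℕ} {n : Fin k → ℕ} {Q : Fin k → Finset (Multiset ℕ)}
    (hQ : ∀ j, (Q j).card = n j ∧ ∀ S ∈ Q j, Multiset.card S = m ∧ ∀ x ∈ S, 1 ≤ x) (t : ℕ) :
    preQ Q t ≤ ∑ j, n j * m := by
  rw [preQ_eq_swap]
  apply Finset.sum_le_sum
  intro j _
  calc ∑ S ∈ Q j, ∑ x ∈ Finset.Icc 1 t, S.count x ≤ ∑ S ∈ Q j, m := by
        apply Finset.sum_le_sum
        intro S hS
        calc ∑ x ∈ Finset.Icc 1 t, S.count x ≤ Multiset.card S := sum_count_le _ _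
          _ = m := ((hQ j).2 S hS).1
    _ = n j * m := by rw [Finset.sum_const, (hQ j).1, smul_eq_mul]

lemma preQ_eq_total {k m : ℕ} {n : Fin k → ℕ} {Q : Fin k → Finset (Multiset ℕ)}
    (hQ : ∀ j, (Q j).card = n j ∧ ∀ S ∈ Q j, Multiset.card S = m ∧ ∀ x ∈ S, 1 ≤ x) (t : ℕ)
    (hbd : ∀ j, ∀ S ∈ Q j, ∀ a ∈ S, a ≤ t) :
    preQ Q t = ∑ j, n j * m := by
  rw [preQ_eq_swap]
  apply Finset.sum_congr rfl
  intro j _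
  have : ∀ S ∈ Q j, ∑ x ∈ Finset.Icc 1 t, S.count x = m := by
    intro S hS
    rw [sum_count_eq _ _ (fun a ha => Finset.mem_Icc.2 ⟨((hQ j).2 S hS).2 a ha, hbd j S hS a ha⟩)]
    exact ((hQ j).2 S hS).1
  rw [Finset.sum_congr rfl this, Finset.sum_const, (hQ j).1, smul_eq_mul]

lemma filter_downclosed_eq_Icc {T : ℕ} (D : Finset ℕ) (hsub : D ⊆ Finset.Icc 1 T)
    (hdc : ∀ x ∈ D, ∀ y, 1 ≤ y → y ≤ x → y ∈ D) : D = Finset.Icc 1 D.card := by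
  rcases D.eq_empty_or_nonempty with rfl | hne
  · simp
  · set M := D.max' hne with hM
    have hDI : D = Finset.Icc 1 M := by
      ext y
      simp only [Finset.mem_Icc]
      constructor
      · intro hy
        exact ⟨(Finset.mem_Icc.1 (hsub hy)).1, Finset.le_max' D y hy⟩
      · intro ⟨h1, h2⟩
        exact hdc M (D.max'_mem hne) y h1 h2
    have hcard : D.card = M := by rw [hDI, Nat.card_Icc]; omega
    rw [hcard, ← hDI]

lemma ite_Icc_sum (t c : ℕ) (hc : 1 ≤ c) :
    ∑ x ∈ Finset.Icc 1 t, (if x = c then 1 else 0) = if c ≤ t then 1 else 0 := by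
  rw [Finset.sum_ite_eq' (Finset.Icc 1 t) c (fun _ => 1)]
  rcases le_or_gt c t with h | h
  · rw [if_pos (Finset.mem_Icc.2 ⟨hc, h⟩), if_pos h]
  · rw [if_neg (fun hm => absurd (Finset.mem_Icc.1 hm).2 (by omega)), if_neg (by omega)]

lemma main_rec {m k : ℕ} (n : Fin k → ℕ) :
    ∀ W (Q : Fin k → Finset (Multiset ℕ)), (∀ j, IsMsetFamily m (n j) (Q j)) →
    (∑ j, ∑ S ∈ Q j, S.sum) ≤ W →
    ∃ Q', (∀ j, IsMsetFamily m (n j) (Q' j)) ∧ (∀ j, ClosedMsetFam m (Q' j)) ∧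
      (∀ t, preQ Q t ≤ preQ Q' t) ∧
      ((¬ ∀ j, ClosedMsetFam m (Q j)) → ∃ t, preQ Q t < preQ Q' t) := by
  intro W
  induction W with
  | zero =>
    intro Q hQ hW
    by_cases hcl : ∀ j, ClosedMsetFam m (Q j)
    · exact ⟨Q, hQ, hcl, fun t => le_rfl, fun h => absurd hcl h⟩
    · exfalso
      obtain ⟨j0, hj0⟩ := not_forall.1 hcl
      obtain ⟨B, hBQ, v, hv2, hvB, hCQ⟩ := exists_elem_witness (hQ j0).2 hj0
      have h1 : B.sum ≤ ∑ S ∈ Q j0, S.sum :=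
        Finset.single_le_sum (fun _ _ => Nat.zero_le _) hBQ
      have h2 : (∑ S ∈ Q j0, S.sum) ≤ ∑ j, ∑ S ∈ Q j, S.sum :=
        Finset.single_le_sum (f := fun j => ∑ S ∈ Q j, S.sum)
          (fun _ _ => Nat.zero_le _) (Finset.mem_univ j0)
      have h3 : v ≤ B.sum := Multiset.le_sum_of_mem hvB
      omega
  | succ W ih =>
    intro Q hQ hW
    by_cases hcl : ∀ j, ClosedMsetFam m (Q j)
    · exact ⟨Q, hQ, hcl, fun t => le_rfl, fun h => absurd hcl h⟩
    classical
    obtain ⟨j0, hj0⟩ := not_forall.1 hcl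
    obtain ⟨B, hBQ, v, hv2, hvB, hCQ⟩ := exists_elem_witness (hQ j0).2 hj0
    set C : Multiset ℕ := (v-1) ::ₘ B.erase v with hC
    set Qn : Fin k → Finset (Multiset ℕ) := Function.update Q j0 (insert C ((Q j0).erase B))
      with hQn
    have hCerase : C ∉ (Q j0).erase B := fun h => hCQ (Finset.mem_of_mem_erase h)
    have hcard0 : 0 < (Q j0).card := Finset.card_pos.2 ⟨B, hBQ⟩
    have hQnj0 : Qn j0 = insert C ((Q j0).erase B) := Function.update_self _ _ _
    have hQnj : ∀ j, j ≠ j0 → Qn j = Q j := fun j hj => Function.update_of_ne hj _ _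
    have hshape : ∀ j, IsMsetFamily m (n j) (Qn j) := by
      intro j
      by_cases hj : j = j0
      · subst hj
        rw [hQnj0]
        constructor
        · rw [Finset.card_insert_of_notMem hCerase, Finset.card_erase_of_mem hBQ]
          have := (hQ j).1
          omega
        · intro S hS
          rcases Finset.mem_insert.1 hS with rfl | hS'
          · exact ⟨by rw [decr_card hvB, ((hQ j).2 B hBQ).1], decr_pos hv2 ((hQ j).2 B hBQ).2⟩
          · exact (hQ j).2 S (Finset.mem_of_mem_erase hS')
      · rw [hQnj j hj]; exact hQ j
    have hrest : ∀ f : Multiset ℕ → ℕ,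
        ∑ j ∈ Finset.univ.erase j0, ∑ S ∈ Qn j, f S = ∑ j ∈ Finset.univ.erase j0, ∑ S ∈ Q j, f S :=
      fun f => Finset.sum_congr rfl (fun j hj => by rw [hQnj j (Finset.ne_of_mem_erase hj)])
    have hweight : (∑ j, ∑ S ∈ Qn j, S.sum) + 1 = ∑ j, ∑ S ∈ Q j, S.sum := by
      have e1 : ∑ j, ∑ S ∈ Qn j, S.sum
          = (∑ S ∈ Qn j0, S.sum) + ∑ j ∈ Finset.univ.erase j0, ∑ S ∈ Qn j, S.sum :=
        (Finset.add_sum_erase _ _ (Finset.mem_univ j0)).symm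
      have e2 : ∑ j, ∑ S ∈ Q j, S.sum
          = (∑ S ∈ Q j0, S.sum) + ∑ j ∈ Finset.univ.erase j0, ∑ S ∈ Q j, S.sum :=
        (Finset.add_sum_erase _ _ (Finset.mem_univ j0)).symm
      have hj0e : (∑ S ∈ Qn j0, S.sum) + 1 = ∑ S ∈ Q j0, S.sum := by
        rw [hQnj0, Finset.sum_insert hCerase, ← Finset.add_sum_erase _ _ hBQ]
        have hds := decr_sum hvB hv2
        rw [← hC] at hds
        omega
      have hr : ∑ j ∈ Finset.univ.erase j0, ∑ S ∈ Qn j, S.sum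
          = ∑ j ∈ Finset.univ.erase j0, ∑ S ∈ Q j, S.sum := hrest (fun S => S.sum)
      omega
    have hmult : ∀ x, msetTupMult Qn x + (if x = v then 1 else 0)
        = msetTupMult Q x + (if x = v-1 then 1 else 0) := by
      intro x
      have e1 : ∑ j, msetMult (Qn j) x
          = msetMult (Qn j0) x + ∑ j ∈ Finset.univ.erase j0, msetMult (Qn j) x :=
        (Finset.add_sum_erase _ _ (Finset.mem_univ j0)).symm
      have e2 : ∑ j, msetMult (Q j) x
          = msetMult (Q j0) x + ∑ j ∈ Finset.univ.erase j0, msetMult (Q j) x :=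
        (Finset.add_sum_erase _ _ (Finset.mem_univ j0)).symm
      have hj0e : msetMult (Qn j0) x + Multiset.count x B
          = msetMult (Q j0) x + Multiset.count x C := by
        unfold msetMult
        rw [hQnj0, Finset.sum_insert hCerase, ← Finset.add_sum_erase _ _ hBQ]
        omega
      have hr : ∑ j ∈ Finset.univ.erase j0, msetMult (Qn j) x
          = ∑ j ∈ Finset.univ.erase j0, msetMult (Q j) x := by
        unfold msetMult
        exact hrest (fun S => S.count x)
      have hd := decr_count hvB x
      rw [← hC] at hd
      unfold msetTupMult
      omega
    have hpre_eq : ∀ t, preQ Qn t + (if v ≤ t then 1 else 0)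
        = preQ Q t + (if v-1 ≤ t then 1 else 0) := by
      intro t
      have hsum : ∑ x ∈ Finset.Icc 1 t, (msetTupMult Qn x + if x = v then 1 else 0)
          = ∑ x ∈ Finset.Icc 1 t, (msetTupMult Q x + if x = v-1 then 1 else 0) :=
        Finset.sum_congr rfl fun x _ => hmult x
      rw [Finset.sum_add_distrib, Finset.sum_add_distrib, ite_Icc_sum t v (by omega),
        ite_Icc_sum t (v-1) (by omega)] at hsum
      exact hsum
    obtain ⟨Q', hsh', hcl', hp', _⟩ := ih Qn hshape (by omega)
    refine ⟨Q', hsh', hcl', ?_, ?_⟩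
    · intro t
      have h := hpre_eq t
      have h' := hp' t
      split_ifs at h <;> omega
    · intro _
      refine ⟨v-1, ?_⟩
      have h := hpre_eq (v-1)
      have h' := hp' (v-1)
      rw [if_neg (by omega), if_pos (le_refl _)] at h
      omega

lemma conj_dom_main {k m : ℕ} {n : Fin k → ℕ} {Q Q' : Fin k → Finset (Multiset ℕ)}
    (hQ : ∀ j, IsMsetFamily m (n j) (Q j)) (hsh' : ∀ j, IsMsetFamily m (n j) (Q' j))
    (htype : TypeDefined (msetTupMult Q))
    (hp' : ∀ t, preQ Q t ≤ preQ Q' t) :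
    ConjDom (msetTupMult Q') (msetTupMult Q) := by
  classical
  set T : ℕ := ∑ j, ∑ S ∈ Q j, S.sum with hTdef
  set f : ℕ → ℕ := msetTupMult Q with hfdef
  set g : ℕ → ℕ := msetTupMult Q' with hgdef
  set total : ℕ := ∑ j, n j * m with htotdef
  have hbdQ : ∀ j, ∀ S ∈ Q j, ∀ a ∈ S, a ≤ T := by
    intro j S hS a ha
    have h1 : a ≤ S.sum := Multiset.le_sum_of_mem ha
    have h2 : S.sum ≤ ∑ S ∈ Q j, S.sum :=
      Finset.single_le_sum (fun _ _ => Nat.zero_le _) hS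
    have h3 : (∑ S ∈ Q j, S.sum) ≤ T :=
      Finset.single_le_sum (f := fun j => ∑ S ∈ Q j, S.sum)
        (fun _ _ => Nat.zero_le _) (Finset.mem_univ j)
    omega
  have hf0 : f 0 = 0 := by
    rw [hfdef]
    unfold msetTupMult msetMult
    apply Finset.sum_eq_zero; intro j _
    apply Finset.sum_eq_zero; intro S hS
    rw [Multiset.count_eq_zero]
    intro h0
    exact absurd ((hQ j).2 S hS).2 (by push_neg; exact ⟨0, h0, by omega⟩)
  have hg0 : g 0 = 0 := by
    rw [hgdef]
    unfold msetTupMult msetMult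
    apply Finset.sum_eq_zero; intro j _
    apply Finset.sum_eq_zero; intro S hS
    rw [Multiset.count_eq_zero]
    intro h0
    exact absurd ((hsh' j).2 S hS).2 (by push_neg; exact ⟨0, h0, by omega⟩)
  have hf_hi : ∀ x, T < x → f x = 0 := by
    intro x hx
    rw [hfdef]
    unfold msetTupMult msetMult
    apply Finset.sum_eq_zero; intro j _
    apply Finset.sum_eq_zero; intro S hS
    rw [Multiset.count_eq_zero]
    intro h0
    exact absurd (hbdQ j S hS x h0) (by omega)
  have hpreF : ∀ t, T ≤ t → preQ Q t = total := by
    intro t ht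
    exact preQ_eq_total (fun j => hQ j) t (fun j S hS a ha => le_trans (hbdQ j S hS a ha) ht)
  have hgle : ∀ t, preQ Q' t ≤ total := fun t => preQ_le_total (fun j => hsh' j) t
  have hpreG : ∀ t, T ≤ t → preQ Q' t = total := by
    intro t ht
    exact le_antisymm (hgle t) (le_trans (le_of_eq (hpreF t ht).symm) (hp' t))
  have hsplitG : ∀ t, preQ Q' (t+1) = preQ Q' t + g (t+1) := by
    intro t
    exact Finset.sum_Icc_succ_top (by omega) _
  have hg_hi : ∀ x, T < x → g x = 0 := by
    intro x hx
    cases x with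
    | zero => exact hg0
    | succ t =>
      have h1 := hsplitG t
      rw [hpreG t (by omega), hpreG (t+1) (by omega)] at h1
      omega
  intro jj
  -- rewrite finsums as finite sums over Icc 1 T
  have hsuppf : Function.support (fun x => min (f x) jj) ⊆ ↑(Finset.Icc 1 T) := by
    intro x hx
    rw [Function.mem_support] at hx
    have hfx : f x ≠ 0 := fun h => hx (by rw [h]; simp)
    simp only [Finset.coe_Icc, Set.mem_Icc]
    constructor
    · by_contra h; push_neg at h; interval_cases x; exact hfx hf0
    · by_contra h; push_neg at h; exact hfx (hf_hi x h)
  have hsuppg : Function.support (fun x => min (g x) jj) ⊆ ↑(Finset.Icc 1 T) := by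
    intro x hx
    rw [Function.mem_support] at hx
    have hgx : g x ≠ 0 := fun h => hx (by rw [h]; simp)
    simp only [Finset.coe_Icc, Set.mem_Icc]
    constructor
    · by_contra h; push_neg at h; interval_cases x; exact hgx hg0
    · by_contra h; push_neg at h; exact hgx (hg_hi x h)
  have hps_f : partSum f jj = ∑ x ∈ Finset.Icc 1 T, min (f x) jj :=
    finsum_eq_sum_of_support_subset _ hsuppf
  have hps_g : partSum g jj = ∑ x ∈ Finset.Icc 1 T, min (g x) jj :=
    finsum_eq_sum_of_support_subset _ hsuppg
  set D : Finset ℕ := (Finset.Icc 1 T).filter (fun x => jj ≤ f x) with hDdef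
  set s : ℕ := D.card with hsdef
  have hD : D = Finset.Icc 1 s := by
    apply filter_downclosed_eq_Icc D (Finset.filter_subset _ _)
    intro x hx y hy1 hyx
    simp only [hDdef, Finset.mem_filter, Finset.mem_Icc] at hx ⊢
    refine ⟨⟨hy1, le_trans hyx hx.1.2⟩, le_trans hx.2 (htype y x hy1 hyx)⟩
  have hsT : s ≤ T := by
    have h := Finset.card_filter_le (Finset.Icc 1 T) (fun x => jj ≤ f x)
    rw [← hDdef, Nat.card_Icc] at h
    omega
  have hun : Finset.Icc 1 T = Finset.Icc 1 s ∪ Finset.Ioc s T := by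
    ext x
    simp only [Finset.mem_Icc, Finset.mem_union, Finset.mem_Ioc]
    omega
  have hdis : Disjoint (Finset.Icc 1 s) (Finset.Ioc s T) := by
    rw [Finset.disjoint_left]
    intro x hx hx'
    simp only [Finset.mem_Icc] at hx
    simp only [Finset.mem_Ioc] at hx'
    omega
  have hmem1 : ∀ x ∈ Finset.Icc 1 s, jj ≤ f x := by
    intro x hx
    have : x ∈ D := by rw [hD]; exact hx
    exact (Finset.mem_filter.1 this).2
  have hmem2 : ∀ x ∈ Finset.Ioc s T, f x < jj := by
    intro x hx
    simp only [Finset.mem_Ioc] at hx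
    have hnot : x ∉ D := by
      rw [hD]
      simp only [Finset.mem_Icc]
      omega
    rw [hDdef, Finset.mem_filter] at hnot
    push_neg at hnot
    exact hnot (Finset.mem_Icc.2 ⟨by omega, hx.2⟩)
  have hfval : ∑ x ∈ Finset.Icc 1 T, min (f x) jj = s * jj + ∑ x ∈ Finset.Ioc s T, f x := by
    rw [hun, Finset.sum_union hdis]
    congr 1
    · rw [Finset.sum_congr rfl (fun x hx => min_eq_right (hmem1 x hx)),
        Finset.sum_const, Nat.card_Icc, smul_eq_mul, Nat.add_sub_cancel]
    · exact Finset.sum_congr rfl (fun x hx => min_eq_left (le_of_lt (hmem2 x hx)))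
  have hgval : ∑ x ∈ Finset.Icc 1 T, min (g x) jj ≤ s * jj + ∑ x ∈ Finset.Ioc s T, g x := by
    rw [hun, Finset.sum_union hdis]
    gcongr ?_ + ?_ with x hx x hx
    · calc ∑ x ∈ Finset.Icc 1 s, min (g x) jj ≤ ∑ _x ∈ Finset.Icc 1 s, jj :=
          Finset.sum_le_sum (fun x _ => min_le_right _ _)
        _ = s * jj := by rw [Finset.sum_const, Nat.card_Icc, smul_eq_mul, Nat.add_sub_cancel]
    · exact Finset.sum_le_sum (fun x _ => min_le_left _ _)
  have hIoc : ∑ x ∈ Finset.Ioc s T, g x ≤ ∑ x ∈ Finset.Ioc s T, f x := by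
    have e1 : preQ Q' T = preQ Q' s + ∑ x ∈ Finset.Ioc s T, g x := by
      rw [preQ, preQ, hun, Finset.sum_union hdis]
    have e2 : preQ Q T = preQ Q s + ∑ x ∈ Finset.Ioc s T, f x := by
      rw [preQ, preQ, hun, Finset.sum_union hdis]
    have e3 : preQ Q' T = preQ Q T := by rw [hpreG T le_rfl, hpreF T le_rfl]
    have e4 := hp' s
    omega
  rw [hps_f, hps_g, hfval]
  omega

/-- Any multiset family tuple with defined type can be replaced by a closed
one whose type is dominated by the original; strictly so if the original is not closed. -/
theorem stmt_19 (m k : ℕ) (n : Fin k → ℕ) (Q : Fin k → Finset (Multiset ℕ))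
    (hQ : ∀ j, IsMsetFamily m (n j) (Q j))
    (htype : TypeDefined (msetTupMult Q)) :
    ∃ Q' : Fin k → Finset (Multiset ℕ),
      (∀ j, IsMsetFamily m (n j) (Q' j)) ∧
      (∀ j, ClosedMsetFam m (Q' j)) ∧
      TypeDefined (msetTupMult Q') ∧
      ConjDom (msetTupMult Q') (msetTupMult Q) ∧
      (¬ (∀ j, ClosedMsetFam m (Q j)) → ConjStrictDom (msetTupMult Q') (msetTupMult Q)) := by
  classical
  obtain ⟨Q', hsh', hcl', hp', hstrict⟩ :=
    main_rec n (∑ j, ∑ S ∈ Q j, S.sum) Q hQ le_rfl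
  have hdom : ConjDom (msetTupMult Q') (msetTupMult Q) := conj_dom_main hQ hsh' htype hp'
  refine ⟨Q', hsh', hcl', ?_, hdom, ?_⟩
  · have step : ∀ i, 1 ≤ i → msetTupMult Q' (i+1) ≤ msetTupMult Q' i := by
      intro i hi
      exact Finset.sum_le_sum fun j _ => closed_step ((hsh' j).2) (hcl' j) hi
    intro i j h1 hij
    induction j, hij using Nat.le_induction with
    | base => exact le_rfl
    | succ j hj ih => exact le_trans (step j (by omega)) ih
  · intro hnc
    refine ⟨hdom, ?_⟩
    obtain ⟨t, ht⟩ := hstrict hnc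
    by_contra h
    push_neg at h
    have heq : preQ Q t = preQ Q' t :=
      Finset.sum_congr rfl (fun x hx => (h x (Finset.mem_Icc.1 hx).1).symm)
    omega
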